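/- In the complex group algebra of the free group F_N on N ≥ 1 generators, the generating operator x = X_1 commutes with X_n for every n ≥ 1: x · X_n = X_n · x. -/

import Mathlib

/-- `Xop N n` is the operator `X_n`: the sum, in the complex group algebra
`ℂ[F_N] = MonoidAlgebra ℂ (FreeGroup (Fin N))`, of the basis elements of all
words `w` whose reduced word has length `n`. Note `Xop N 0 = 1`. -/
noncomputable def Xop (N n : ℕ) : MonoidAlgebra ℂ (FreeGroup (Fin N)) :=
  ∑ᶠ w ∈ {w : FreeGroup (Fin N) | (FreeGroup.toWord w).length = n},
    MonoidAlgebra.of ℂ (FreeGroup (Fin N)) w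

/-- The canonical trace `τ` on `ℂ[F_N]`: the coefficient at the identity. -/
noncomputable def tr {N : ℕ} (a : MonoidAlgebra ℂ (FreeGroup (Fin N))) : ℂ := a.coeff 1

namespace Stmt11Aux

open Finset FreeGroup

lemma finite_len (N n : ℕ) : {w : FreeGroup (Fin N) | (FreeGroup.toWord w).length = n}.Finite :=
  (List.finite_length_eq _ n).preimage (toWord_injective.injOn)

lemma len_inv {N : ℕ} (v : FreeGroup (Fin N)) : v⁻¹.toWord.length = v.toWord.length := by
  rw [toWord_inv, invRev_length]

lemma inv_mk_single {N : ℕ} (p : Fin N × Bool) :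
    (FreeGroup.mk [p])⁻¹ = FreeGroup.mk [(p.1, !p.2)] := by
  rw [inv_mk]; simp [invRev]

lemma toWord_single_mul {N : ℕ} (p : Fin N × Bool) (v : FreeGroup (Fin N)) :
    (FreeGroup.mk [p] * v).toWord = List.casesOn v.toWord [p]
      (fun hd tl => if p.1 = hd.1 ∧ p.2 = !hd.2 then tl else p :: hd :: tl) := by
  conv_lhs => rw [← mk_toWord (x := v)]
  rw [mul_mk, toWord_mk, List.singleton_append, reduce.cons, reduce_toWord]

lemma toWord_single_mul_cons {N : ℕ} (p hd : Fin N × Bool) (tl : List (Fin N × Bool))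
    {v : FreeGroup (Fin N)} (hv : v.toWord = hd :: tl) :
    (FreeGroup.mk [p] * v).toWord =
      if p.1 = hd.1 ∧ p.2 = !hd.2 then tl else p :: hd :: tl := by
  rw [toWord_single_mul, hv]

/-- number of single letters `a` with `|a * v| = n`, as a function of `n` and `|v|`. -/
def cnt (N n m : ℕ) : ℕ :=
  if m = 0 then (if n = 1 then 2 * N else 0)
  else (if n = m - 1 then 1 else 0) + (if n = m + 1 then 2 * N - 1 else 0)

lemma card_count {N : ℕ} (v : FreeGroup (Fin N)) (n : ℕ) :
    (Finset.univ.filter fun p : Fin N × Bool =>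
        (FreeGroup.mk [p] * v).toWord.length = n).card = cnt N n v.toWord.length := by
  classical
  rcases hv : v.toWord with _ | ⟨y, T⟩
  · have hv1 : v = 1 := toWord_eq_nil_iff.mp hv
    subst hv1
    have hlen : ∀ p : Fin N × Bool, (FreeGroup.mk [p] * 1).toWord.length = 1 := by
      intro p; rw [mul_one, toWord_mk, reduce_singleton]; rfl
    by_cases h : n = 1
    · subst h
      have : (Finset.univ.filter fun p : Fin N × Bool =>
          (FreeGroup.mk [p] * 1).toWord.length = 1) = Finset.univ := by
        apply Finset.filter_true_of_mem; intro p _; exact hlen p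
      rw [this]
      simp [cnt, Finset.card_univ, Nat.mul_comm]
    · have : (Finset.univ.filter fun p : Fin N × Bool =>
          (FreeGroup.mk [p] * 1).toWord.length = n) = ∅ := by
        apply Finset.filter_false_of_mem; intro p _; rw [hlen p]; omega
      rw [this]
      simp [cnt, h]
  · set p0 : Fin N × Bool := (y.1, !y.2) with hp0
    have hq : ∀ p : Fin N × Bool, (FreeGroup.mk [p] * v).toWord.length =
        if p = p0 then T.length else T.length + 2 := by
      intro p
      rw [toWord_single_mul_cons p y T hv]
      by_cases hp : p = p0
      · subst hp
        simp [hp0]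
      · have hpc : ¬(p.1 = y.1 ∧ p.2 = !y.2) := by
          rintro ⟨h1, h2⟩
          exact hp (Prod.ext h1 h2)
        simp [hpc, hp]
    have huniv : (Finset.univ : Finset (Fin N × Bool))
        = insert p0 (Finset.univ.erase p0) := (Finset.insert_erase (mem_univ p0)).symm
    rw [Finset.card_filter, huniv, Finset.sum_insert (Finset.notMem_erase _ _)]
    have h1 : (if (FreeGroup.mk [p0] * v).toWord.length = n then (1:ℕ) else 0)
        = if n = T.length then 1 else 0 := by
      rw [hq p0, if_pos rfl]
      simp [eq_comm]
    have h2 : ∑ p ∈ Finset.univ.erase p0,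
        (if (FreeGroup.mk [p] * v).toWord.length = n then (1:ℕ) else 0)
        = (Finset.univ.erase p0).card * (if n = T.length + 2 then 1 else 0) := by
      rw [Finset.sum_congr rfl (fun p hp => show _ = (if n = T.length + 2 then (1:ℕ) else 0) by
        rw [hq p, if_neg (Finset.ne_of_mem_erase hp)]; simp [eq_comm]),
        Finset.sum_const, smul_eq_mul]
    have hcard : (Finset.univ.erase p0).card = 2 * N - 1 := by
      rw [Finset.card_erase_of_mem (mem_univ p0), Finset.card_univ]
      simp [Nat.mul_comm]
    rw [h1, h2, hcard]
    simp only [List.length_cons, cnt]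
    split_ifs <;> first | omega | (exfalso; assumption)

lemma Xop_eq_sum (N n : ℕ) :
    Xop N n = ∑ w ∈ (finite_len N n).toFinset,
      MonoidAlgebra.of ℂ (FreeGroup (Fin N)) w :=
  finsum_mem_eq_finite_toFinset_sum _ (finite_len N n)

lemma X1_eq (N : ℕ) :
    Xop N 1 = ∑ p : Fin N × Bool,
      MonoidAlgebra.of ℂ (FreeGroup (Fin N)) (FreeGroup.mk [p]) := by
  classical
  rw [Xop_eq_sum]
  have himg : (finite_len N 1).toFinset
      = Finset.univ.image (fun p : Fin N × Bool => FreeGroup.mk [p]) := by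
    ext w
    simp only [Set.Finite.mem_toFinset, Set.mem_setOf_eq, Finset.mem_image,
      Finset.mem_univ, true_and]
    constructor
    · intro h
      obtain ⟨p, hp⟩ := List.length_eq_one_iff.mp h
      exact ⟨p, by rw [← hp, mk_toWord]⟩
    · rintro ⟨p, rfl⟩
      rw [toWord_mk, reduce_singleton]; rfl
  rw [himg, Finset.sum_image]
  intro p _ q _ h
  have := congrArg FreeGroup.toWord h
  rw [toWord_mk, toWord_mk, reduce_singleton, reduce_singleton] at this
  simpa using this

lemma of_mul_of {N : ℕ} (a b : FreeGroup (Fin N)) :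
    MonoidAlgebra.of ℂ (FreeGroup (Fin N)) a * MonoidAlgebra.of ℂ (FreeGroup (Fin N)) b
      = MonoidAlgebra.single (a * b) (1:ℂ) := by
  rw [MonoidAlgebra.of_apply, MonoidAlgebra.of_apply, MonoidAlgebra.single_mul_single, mul_one]

lemma sum_single_apply {N n : ℕ} (v b : FreeGroup (Fin N))
    (f : FreeGroup (Fin N) → FreeGroup (Fin N))
    (hf : ∀ w, f w = v ↔ w = b) :
    (∑ w ∈ (finite_len N n).toFinset,
      (MonoidAlgebra.single (f w) (1:ℂ) : MonoidAlgebra ℂ (FreeGroup (Fin N)))).coeff v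
      = if b.toWord.length = n then (1:ℂ) else 0 := by
  classical
  rw [MonoidAlgebra.coeff_sum, Finset.sum_apply']
  have : ∀ w ∈ (finite_len N n).toFinset,
      (MonoidAlgebra.single (f w) (1:ℂ) : MonoidAlgebra ℂ (FreeGroup (Fin N))).coeff v
        = if w = b then (1:ℂ) else 0 := by
    intro w _
    rw [MonoidAlgebra.coeff_single_apply, if_congr (hf w) rfl rfl]
  rw [Finset.sum_congr rfl this, Finset.sum_ite_eq' ((finite_len N n).toFinset)]
  simp [Set.Finite.mem_toFinset]

end Stmt11Aux

theorem stmt_11 (N : ℕ) (hN : 1 ≤ N) (n : ℕ) (hn : 1 ≤ n) :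
    Xop N 1 * Xop N n = Xop N n * Xop N 1 := by
  classical
  open Finset FreeGroup Stmt11Aux in
  rw [X1_eq, Xop_eq_sum N n, Finset.sum_mul_sum,
    show (∑ w ∈ (Stmt11Aux.finite_len N n).toFinset,
      MonoidAlgebra.of ℂ (FreeGroup (Fin N)) w) *
      (∑ p : Fin N × Bool, MonoidAlgebra.of ℂ (FreeGroup (Fin N)) (FreeGroup.mk [p]))
      = ∑ p : Fin N × Bool, ∑ w ∈ (Stmt11Aux.finite_len N n).toFinset,
          MonoidAlgebra.of ℂ (FreeGroup (Fin N)) w *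
            MonoidAlgebra.of ℂ (FreeGroup (Fin N)) (FreeGroup.mk [p]) from by
    rw [Finset.sum_mul_sum, Finset.sum_comm]]
  apply MonoidAlgebra.ext
  apply Finsupp.ext
  intro v
  rw [MonoidAlgebra.coeff_sum, MonoidAlgebra.coeff_sum, Finset.sum_apply', Finset.sum_apply']
  have lhs_eq : ∀ p : Fin N × Bool,
      (∑ w ∈ (Stmt11Aux.finite_len N n).toFinset,
        MonoidAlgebra.of ℂ (FreeGroup (Fin N)) (FreeGroup.mk [p]) *
          MonoidAlgebra.of ℂ (FreeGroup (Fin N)) w).coeff v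
      = if (FreeGroup.mk [(p.1, !p.2)] * v).toWord.length = n then (1:ℂ) else 0 := by
    intro p
    rw [Finset.sum_congr rfl (fun w _ => Stmt11Aux.of_mul_of (FreeGroup.mk [p]) w),
      Stmt11Aux.sum_single_apply v ((FreeGroup.mk [p])⁻¹ * v) _
        (fun w => by constructor
                     · rintro rfl; group
                     · rintro rfl; group),
      Stmt11Aux.inv_mk_single]
  have rhs_eq : ∀ p : Fin N × Bool,
      (∑ w ∈ (Stmt11Aux.finite_len N n).toFinset,
        MonoidAlgebra.of ℂ (FreeGroup (Fin N)) w *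
          MonoidAlgebra.of ℂ (FreeGroup (Fin N)) (FreeGroup.mk [p])).coeff v
      = if (FreeGroup.mk [p] * v⁻¹).toWord.length = n then (1:ℂ) else 0 := by
    intro p
    rw [Finset.sum_congr rfl (fun w _ => Stmt11Aux.of_mul_of w (FreeGroup.mk [p])),
      Stmt11Aux.sum_single_apply v (v * (FreeGroup.mk [p])⁻¹) _
        (fun w => by constructor
                     · rintro rfl; group
                     · rintro rfl; group)]
    congr 1
    rw [show v * (FreeGroup.mk [p])⁻¹ = (FreeGroup.mk [p] * v⁻¹)⁻¹ from by group,
      Stmt11Aux.len_inv]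
  have count_eq : ∀ u : FreeGroup (Fin N),
      (∑ p : Fin N × Bool,
        if (FreeGroup.mk [p] * u).toWord.length = n then (1:ℂ) else 0)
      = ((Stmt11Aux.cnt N n u.toWord.length : ℕ) : ℂ) := by
    intro u
    rw [← Stmt11Aux.card_count u n, Finset.card_filter]
    push_cast
    simp
  have einv : Function.Involutive (fun p : Fin N × Bool => (p.1, !p.2)) := by
    intro p; simp
  have reindex : (∑ p : Fin N × Bool,
      if (FreeGroup.mk [(p.1, !p.2)] * v).toWord.length = n then (1:ℂ) else 0)
      = ∑ p : Fin N × Bool,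
        if (FreeGroup.mk [p] * v).toWord.length = n then (1:ℂ) else 0 := by
    have := Equiv.sum_comp einv.toPerm
      (fun q : Fin N × Bool =>
        if (FreeGroup.mk [q] * v).toWord.length = n then (1:ℂ) else 0)
    simp only [Function.Involutive.coe_toPerm] at this
    convert this using 3; congr!
  calc (∑ p : Fin N × Bool, (∑ w ∈ (Stmt11Aux.finite_len N n).toFinset,
        MonoidAlgebra.of ℂ (FreeGroup (Fin N)) (FreeGroup.mk [p]) *
          MonoidAlgebra.of ℂ (FreeGroup (Fin N)) w).coeff v)
      = ∑ p : Fin N × Bool,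
          if (FreeGroup.mk [(p.1, !p.2)] * v).toWord.length = n then (1:ℂ) else 0 :=
        Finset.sum_congr rfl fun p _ => lhs_eq p
    _ = ∑ p : Fin N × Bool,
          if (FreeGroup.mk [p] * v).toWord.length = n then (1:ℂ) else 0 := reindex
    _ = ((Stmt11Aux.cnt N n v.toWord.length : ℕ) : ℂ) := count_eq v
    _ = ((Stmt11Aux.cnt N n v⁻¹.toWord.length : ℕ) : ℂ) := by rw [Stmt11Aux.len_inv]
    _ = ∑ p : Fin N × Bool,
          if (FreeGroup.mk [p] * v⁻¹).toWord.length = n then (1:ℂ) else 0 :=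
        (count_eq v⁻¹).symm
    _ = ∑ p : Fin N × Bool, (∑ w ∈ (Stmt11Aux.finite_len N n).toFinset,
          MonoidAlgebra.of ℂ (FreeGroup (Fin N)) w *
            MonoidAlgebra.of ℂ (FreeGroup (Fin N)) (FreeGroup.mk [p])).coeff v :=
        Finset.sum_congr rfl fun p _ => (rhs_eq p).symm
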